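/- arXiv:2509.06104 — 3 statements merged into one kernel-verified Lean document; each statement's English description precedes it below -/
import Mathlib

section
/- Let M be the (2d+1)×(2d+1) incidence matrix of the morphism φ given by φ(i) = 0(i+1) for 0 ≤ i ≤ 2d-1 and φ(2d) = 0(2d)(2d); explicitly, M has first row all ones, subdiagonal ones in columns 0 through 2d-1 (M_{i+1,i} = 1 for 0 ≤ i ≤ 2d-1), and M_{2d,2d} = 2, with all other entries zero. Then the characteristic polynomial of M equals (t^(d+1) - 2t^d - 1)·(t^d - t^(d-1) - ... - t - 1). -/
open Polynomial

/-- The incidence matrix of the morphism φ. -/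
def Mmat (d : ℕ) : Matrix (Fin (2 * d + 1)) (Fin (2 * d + 1)) ℤ :=
  Matrix.of fun i j =>
    if (i : ℕ) = 0 then 1
    else if (i : ℕ) = (j : ℕ) + 1 then 1
    else if (i : ℕ) = 2 * d ∧ (j : ℕ) = 2 * d then 2
    else 0

namespace Stmt4

open Matrix Finset

noncomputable def F (k : ℕ) : ℤ[X] := X ^ k - ∑ i ∈ Finset.range k, X ^ i

noncomputable def U (d : ℕ) : Matrix (Fin (2*d+1)) (Fin (2*d+1)) ℤ[X] :=
  Matrix.of fun j k => if (j:ℕ) ≤ (k:ℕ) then X ^ ((k:ℕ) - (j:ℕ)) else 0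

noncomputable def V (d : ℕ) : Matrix (Fin (2*d+1)) (Fin (2*d+1)) ℤ[X] :=
  Matrix.of fun j k => if j = k then 1 else
    if (j:ℕ) = 2*d - 1 ∧ (k:ℕ) = 2*d then -2 else 0

noncomputable def L (d : ℕ) : Matrix (Fin (2*d+1)) (Fin (2*d+1)) ℤ[X] :=
  Matrix.of fun i j => if (i:ℕ) = 0 then F (j:ℕ) else if i = j then 1 else 0

noncomputable def E1 (d : ℕ) : Matrix (Fin (2*d+1)) (Fin (2*d+1)) ℤ[X] :=
  Matrix.of fun i k => if (i:ℕ) = 0 then F ((k:ℕ)+1)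
    else if (k:ℕ)+1 = (i:ℕ) then -1
    else if (i:ℕ) = 2*d ∧ (k:ℕ) = 2*d then -2 else 0

noncomputable def p (d : ℕ) : ℤ[X] := F (2*d+1) - 2 * F (2*d)

noncomputable def E2 (d : ℕ) : Matrix (Fin (2*d+1)) (Fin (2*d+1)) ℤ[X] :=
  Matrix.of fun i k => if (i:ℕ) = 0 then (if (k:ℕ) = 2*d then p d else F ((k:ℕ)+1))
    else if (k:ℕ)+1 = (i:ℕ) then -1 else 0

noncomputable def Q (d : ℕ) : Matrix (Fin (2*d+1)) (Fin (2*d+1)) ℤ[X] :=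
  Matrix.of fun i k => if (i:ℕ) = 0 then (if (k:ℕ) = 2*d then p d else 0)
    else if (k:ℕ)+1 = (i:ℕ) then -1 else 0

lemma charM_apply (d : ℕ) (i j : Fin (2*d+1)) :
    charmatrix (Mmat d) i j =
      if (i:ℕ) = 0 then (if (j:ℕ) = 0 then X - 1 else -1)
      else if (j:ℕ)+1 = (i:ℕ) then -1
      else if (i:ℕ) = (j:ℕ) then (if (i:ℕ) = 2*d then X - 2 else X)
      else 0 := by
  rcases eq_or_ne i j with rfl | hij
  · rw [charmatrix_apply_eq]
    simp only [Mmat, Matrix.of_apply]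
    split_ifs with h1 h2 h3 h4 <;> first | omega | (simp only [Polynomial.C_1, Polynomial.C_0, map_ofNat]; try ring)
  · rw [charmatrix_apply_ne _ _ _ hij]
    have hij' : (i:ℕ) ≠ (j:ℕ) := fun h => hij (Fin.ext h)
    simp only [Mmat, Matrix.of_apply]
    split_ifs with h1 h2 h3 h4 h5 h6 <;> first | omega | (simp only [Polynomial.C_1, Polynomial.C_0, map_ofNat]; try ring)

lemma sumU (d : ℕ) (k : Fin (2*d+1)) :
    ∑ j : Fin (2*d+1), U d j k = ∑ i ∈ Finset.range ((k:ℕ)+1), (X:ℤ[X]) ^ i := by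
  have h1 : ∑ j : Fin (2*d+1), U d j k
      = ∑ j ∈ Finset.range (2*d+1), (if j ≤ (k:ℕ) then (X:ℤ[X]) ^ ((k:ℕ) - j) else 0) :=
    Fin.sum_univ_eq_sum_range (fun j => if j ≤ (k:ℕ) then (X:ℤ[X]) ^ ((k:ℕ) - j) else 0) (2*d+1)
  rw [h1, ← Finset.sum_subset (Finset.range_subset_range.2 (by omega : (k:ℕ)+1 ≤ 2*d+1))
      (fun x _ hx => if_neg (by simp at hx ⊢; omega))]
  rw [Finset.sum_congr rfl (fun j hj => if_pos (by simp at hj; omega))]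
  have h2 := Finset.sum_range_reflect (fun i => (X:ℤ[X])^i) ((k:ℕ)+1)
  simp only [Nat.add_sub_cancel] at h2
  exact h2

lemma PU (d : ℕ) : charmatrix (Mmat d) * U d = E1 d := by
  refine Matrix.ext fun i k => ?_
  rw [Matrix.mul_apply]
  by_cases hi : (i:ℕ) = 0
  · have hdecomp : ∀ j : Fin (2*d+1), charmatrix (Mmat d) i j * U d j k
        = -(U d j k) + (if j = i then X ^ ((k:ℕ)+1) else 0) := by
      intro j
      rw [charM_apply, if_pos hi]
      by_cases hj : (j:ℕ) = 0
      · have hji : j = i := Fin.ext (by omega)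
        rw [if_pos hj, if_pos hji]
        simp only [U, Matrix.of_apply, hj, Nat.zero_le, if_true, Nat.sub_zero]
        ring
      · rw [if_neg hj, if_neg (fun h => hj (by rw [h]; exact hi))]
        ring
    rw [Finset.sum_congr rfl (fun j _ => hdecomp j), Finset.sum_add_distrib,
      Finset.sum_neg_distrib, sumU, Finset.sum_ite_eq' Finset.univ i
        (fun _ => (X:ℤ[X]) ^ ((k:ℕ)+1)), if_pos (Finset.mem_univ i)]
    simp only [E1, Matrix.of_apply, if_pos hi, F]
    ring
  · have hip : (i:ℕ) - 1 < 2*d+1 := by omega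
    set ip : Fin (2*d+1) := ⟨(i:ℕ)-1, hip⟩ with hipdef
    have hdecomp : ∀ j : Fin (2*d+1), charmatrix (Mmat d) i j * U d j k
        = (if j = ip then -(U d ip k) else 0)
          + (if j = i then (if (i:ℕ)=2*d then X-2 else X) * U d i k else 0) := by
      intro j
      rw [charM_apply, if_neg hi]
      by_cases hj1 : j = ip
      · have hv : (j:ℕ)+1 = (i:ℕ) := by rw [hj1]; simp [hipdef]; omega
        rw [if_pos hv, if_pos hj1, if_neg (fun h : j = i => by rw [h] at hv; omega)]
        rw [hj1]; ring
      · have hv : ¬ ((j:ℕ)+1 = (i:ℕ)) := fun h => hj1 (Fin.ext (by simp [hipdef]; omega))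
        rw [if_neg hv]
        by_cases hj2 : j = i
        · rw [if_pos (by rw [hj2] : (i:ℕ) = (j:ℕ)), if_pos hj2, if_neg hj1, hj2]
          ring
        · rw [if_neg (fun h : (i:ℕ) = (j:ℕ) => hj2 (Fin.ext h.symm)), if_neg hj1, if_neg hj2]
          ring
    rw [Finset.sum_congr rfl (fun j _ => hdecomp j), Finset.sum_add_distrib,
      Finset.sum_ite_eq' Finset.univ ip, Finset.sum_ite_eq' Finset.univ i,
      if_pos (Finset.mem_univ ip), if_pos (Finset.mem_univ i)]
    simp only [U, E1, Matrix.of_apply, hipdef, if_neg hi]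
    split_ifs with h1 h2 h3 h4 h5 h6 h7 <;>
      first
        | omega
        | ring1
        | (rw [show (k:ℕ)-((i:ℕ)-1) = ((k:ℕ)-(i:ℕ))+1 from by omega]; ring1)
        | (rw [show (k:ℕ)-((i:ℕ)-1) = 1 from by omega,
               show (k:ℕ)-(i:ℕ) = 0 from by omega]; ring1)
        | (rw [show (k:ℕ)-((i:ℕ)-1) = 0 from by omega]; ring1)

lemma E1V (d : ℕ) (hd : 1 ≤ d) : E1 d * V d = E2 d := by
  refine Matrix.ext fun i k => ?_
  rw [Matrix.mul_apply]
  obtain ⟨a, ha⟩ : ∃ a : Fin (2*d+1), (a:ℕ) = 2*d-1 := ⟨⟨2*d-1, by omega⟩, rfl⟩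
  have hdecomp : ∀ j, E1 d i j * V d j k
      = (if j = k then E1 d i k else 0)
        + (if j = a then (if (k:ℕ) = 2*d then -2 * E1 d i a else 0) else 0) := by
    intro j
    simp only [V, Matrix.of_apply]
    by_cases hj1 : j = k
    · rw [if_pos hj1, if_pos hj1, hj1, mul_one]
      by_cases hka : k = a
      · rw [if_pos hka, if_neg (show ¬(k:ℕ) = 2*d by rw [hka, ha]; omega)]; ring
      · rw [if_neg hka]; ring
    · rw [if_neg hj1, if_neg hj1]
      by_cases hj2 : (j:ℕ) = 2*d - 1 ∧ (k:ℕ) = 2*d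
      · have hja : j = a := Fin.ext (by rw [ha]; exact hj2.1)
        rw [if_pos hj2, if_pos hja, if_pos hj2.2, hja]; ring
      · rw [if_neg hj2, mul_zero]
        by_cases hja : j = a
        · have hk2 : ¬(k:ℕ) = 2*d := fun h => hj2 ⟨by rw [hja, ha], h⟩
          rw [if_pos hja, if_neg hk2]; ring
        · rw [if_neg hja]; ring
  rw [Finset.sum_congr rfl (fun j _ => hdecomp j), Finset.sum_add_distrib,
    Finset.sum_ite_eq' Finset.univ k, Finset.sum_ite_eq' Finset.univ a,
    if_pos (Finset.mem_univ k), if_pos (Finset.mem_univ a)]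
  have hik := i.isLt
  have hkk := k.isLt
  simp only [E1, E2, Matrix.of_apply, ha]
  by_cases hi : (i:ℕ) = 0
  · rw [if_pos hi, if_pos hi, if_pos hi]
    by_cases hk : (k:ℕ) = 2*d
    · rw [if_pos hk, if_pos hk, hk, show 2*d-1+1 = 2*d from by omega]
      simp only [p]; ring
    · rw [if_neg hk, if_neg hk]; ring
  · rw [if_neg hi, if_neg hi, if_neg hi]
    split_ifs <;> first | omega | ring1

lemma F_zero : F 0 = 1 := by simp [F]

lemma LE2 (d : ℕ) : L d * E2 d = Q d := by
  refine Matrix.ext fun i k => ?_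
  rw [Matrix.mul_apply]
  have hik := i.isLt
  have hkk := k.isLt
  by_cases hi : (i:ℕ) = 0
  · by_cases hk : (k:ℕ) = 2*d
    · have hdecomp : ∀ j, L d i j * E2 d j k = if j = i then p d else 0 := by
        intro j
        have hjk := j.isLt
        simp only [L, E2, Matrix.of_apply, if_pos hi]
        by_cases hj0 : (j:ℕ) = 0
        · have hji : j = i := Fin.ext (by omega)
          rw [if_pos hji, if_pos hj0, if_pos hk, hj0, F_zero, one_mul]
        · have hji : ¬ j = i := fun h => hj0 (by rw [h]; exact hi)
          rw [if_neg hji, if_neg hj0, if_neg (show ¬((k:ℕ)+1 = (j:ℕ)) by omega), mul_zero]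
      rw [Finset.sum_congr rfl (fun j _ => hdecomp j),
        Finset.sum_ite_eq' Finset.univ i (fun _ => p d), if_pos (Finset.mem_univ i)]
      simp only [Q, Matrix.of_apply, if_pos hi, if_pos hk]
    · obtain ⟨kp, hkp⟩ : ∃ kp : Fin (2*d+1), (kp:ℕ) = (k:ℕ)+1 := ⟨⟨(k:ℕ)+1, by omega⟩, rfl⟩
      have hdecomp : ∀ j, L d i j * E2 d j k
          = (if j = i then F ((k:ℕ)+1) else 0) + (if j = kp then -(F ((k:ℕ)+1)) else 0) := by
        intro j
        have hjk := j.isLt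
        simp only [L, E2, Matrix.of_apply, if_pos hi]
        by_cases hj0 : (j:ℕ) = 0
        · have hji : j = i := Fin.ext (by omega)
          have hjkp : ¬ j = kp := fun h => by rw [h, hkp] at hj0; omega
          rw [if_pos hj0, if_pos hji, if_neg hjkp, if_neg hk, hj0, F_zero, one_mul]
          ring
        · have hji : ¬ j = i := fun h => hj0 (by rw [h]; exact hi)
          rw [if_neg hj0, if_neg hji]
          by_cases hjk2 : (k:ℕ)+1 = (j:ℕ)
          · have hjkp : j = kp := Fin.ext (by omega)
            rw [if_pos hjk2, if_pos hjkp, show (j:ℕ) = (k:ℕ)+1 from by omega]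
            ring
          · rw [if_neg hjk2, mul_zero,
              if_neg (fun h : j = kp => hjk2 (by rw [h, hkp]))]
            ring
      rw [Finset.sum_congr rfl (fun j _ => hdecomp j), Finset.sum_add_distrib,
        Finset.sum_ite_eq' Finset.univ i, Finset.sum_ite_eq' Finset.univ kp,
        if_pos (Finset.mem_univ i), if_pos (Finset.mem_univ kp)]
      simp only [Q, Matrix.of_apply, if_pos hi, if_neg hk]
      ring
  · have hdecomp : ∀ j, L d i j * E2 d j k = if j = i then E2 d i k else 0 := by
      intro j
      simp only [L, Matrix.of_apply, if_neg hi]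
      by_cases hj : i = j
      · rw [if_pos hj, one_mul, if_pos hj.symm, hj]
      · rw [if_neg hj, zero_mul, if_neg (fun h => hj h.symm)]
    rw [Finset.sum_congr rfl (fun j _ => hdecomp j),
      Finset.sum_ite_eq' Finset.univ i, if_pos (Finset.mem_univ i)]
    simp only [E2, Q, Matrix.of_apply, if_neg hi]

lemma detU (d : ℕ) : (U d).det = 1 := by
  rw [Matrix.det_of_upperTriangular (M := U d)
    (fun i j (h : (j:Fin _) < i) => by
      simp only [U, Matrix.of_apply]
      exact if_neg (by have : (j:ℕ) < (i:ℕ) := h; omega))]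
  refine Finset.prod_eq_one fun i _ => ?_
  simp [U]

lemma detV (d : ℕ) : (V d).det = 1 := by
  rw [Matrix.det_of_upperTriangular (M := V d)
    (fun i j (h : (j:Fin _) < i) => by
      have hji : (j:ℕ) < (i:ℕ) := h
      simp only [V, Matrix.of_apply]
      rw [if_neg (fun e => by rw [e] at hji; omega), if_neg (by omega)])]
  refine Finset.prod_eq_one fun i _ => ?_
  simp [V]

lemma detL (d : ℕ) : (L d).det = 1 := by
  rw [Matrix.det_of_upperTriangular (M := L d)
    (fun i j (h : (j:Fin _) < i) => by
      have hji : (j:ℕ) < (i:ℕ) := h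
      simp only [L, Matrix.of_apply]
      rw [if_neg (by omega), if_neg (fun e => by rw [e] at hji; omega)])]
  refine Finset.prod_eq_one fun i _ => ?_
  simp only [L, Matrix.of_apply]
  split_ifs with h
  · rw [h, F_zero]
  · rfl

lemma Qfact (d : ℕ) : Q d =
    Matrix.diagonal (fun i : Fin (2*d+1) => if (i:ℕ) = 0 then p d else -1)
      * Equiv.Perm.permMatrix ℤ[X] (finRotate (2*d+1))⁻¹ := by
  refine Matrix.ext fun i k => ?_
  rw [Matrix.diagonal_mul]
  have hperm : Equiv.Perm.permMatrix ℤ[X] (finRotate (2*d+1))⁻¹ i k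
      = if finRotate (2*d+1) k = i then 1 else 0 := by
    rw [Equiv.Perm.permMatrix, PEquiv.toMatrix_apply, Equiv.toPEquiv_apply]
    simp only [Option.mem_some_iff]
    congr 1
    simp only [eq_iff_iff]
    constructor
    · intro h; rw [← h]; exact Equiv.apply_symm_apply _ i
    · intro h; rw [← h]; exact Equiv.symm_apply_apply _ k
  rw [hperm]
  have hik := i.isLt
  have hkk := k.isLt
  have hval : (finRotate (2*d+1) k : ℕ) = if (k:ℕ) = 2*d then 0 else (k:ℕ)+1 := by
    rw [finRotate_succ_apply, Fin.val_add_one]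
    by_cases h : k = Fin.last (2*d)
    · rw [if_pos h, if_pos (by rw [h]; rfl)]
    · rw [if_neg h, if_neg (fun e => h (Fin.ext (by rw [e]; rfl)))]
  have hcond : (finRotate (2*d+1) k = i) ↔ ((finRotate (2*d+1) k : ℕ) = (i:ℕ)) :=
    ⟨fun h => by rw [h], fun h => Fin.ext h⟩
  have hif : (if (finRotate (2*d+1)) k = i then (1:ℤ[X]) else 0)
      = (if (if (k:ℕ) = 2*d then 0 else (k:ℕ)+1) = (i:ℕ) then 1 else 0) := by
    refine if_congr ?_ rfl rfl
    rw [hcond, hval]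
  rw [hif]
  simp only [Q, Matrix.of_apply]
  split_ifs <;> first | omega | ring1
lemma detQ (d : ℕ) : (Q d).det = p d := by
  rw [Qfact, Matrix.det_mul, Matrix.det_permutation, Matrix.det_diagonal]
  have hsign : Equiv.Perm.sign (finRotate (2*d+1))⁻¹ = 1 := by
    rw [Equiv.Perm.sign_inv, sign_finRotate]
    exact Even.neg_one_pow ⟨d, by omega⟩
  rw [hsign]
  have hprod : (∏ i : Fin (2*d+1), if (i:ℕ) = 0 then p d else -1) = p d := by
    rw [Fin.prod_univ_succ,
      Finset.prod_congr rfl (fun (i : Fin (2*d)) _ =>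
        if_neg (show ¬((i.succ : Fin (2*d+1)):ℕ) = 0 from by simp)),
      if_pos (show ((0 : Fin (2*d+1)):ℕ) = 0 from rfl), Finset.prod_const]
    simp only [Finset.card_univ, Fintype.card_fin]
    rw [Even.neg_one_pow ⟨d, by ring⟩, mul_one]
  rw [hprod]
  simp

lemma pid (d : ℕ) : p d =
    (X ^ (d + 1) - 2 * X ^ d - 1) * (X ^ d - ∑ i ∈ Finset.range d, X ^ i) := by
  have hX : (X - 1 : ℤ[X]) ≠ 0 := by
    have := Polynomial.X_sub_C_ne_zero (1:ℤ)
    simpa using this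
  apply mul_right_cancel₀ hX
  have h1 := geom_sum_mul (X:ℤ[X]) (2*d+1)
  have h2 := geom_sum_mul (X:ℤ[X]) (2*d)
  have h3 := geom_sum_mul (X:ℤ[X]) d
  simp only [p, F]
  linear_combination (-1:ℤ[X]) * h1 + 2 * h2 + (X^(d+1) - 2*X^d - 1) * h3

end Stmt4

theorem stmt_4 (d : ℕ) (hd : 1 ≤ d) :
    (Mmat d).charpoly =
      (X ^ (d + 1) - 2 * X ^ d - 1) * (X ^ d - ∑ i ∈ Finset.range d, X ^ i) := by
  have e : Stmt4.L d * (Matrix.charmatrix (Mmat d) * Stmt4.U d * Stmt4.V d) = Stmt4.Q d := by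
    rw [Stmt4.PU, Stmt4.E1V d hd, Stmt4.LE2 d]
  have hdet := congrArg Matrix.det e
  rw [Matrix.det_mul, Matrix.det_mul, Matrix.det_mul, Stmt4.detL, Stmt4.detU,
    Stmt4.detV, Stmt4.detQ, one_mul, mul_one, mul_one] at hdet
  rw [show (Mmat d).charpoly = (Matrix.charmatrix (Mmat d)).det from rfl, hdet, Stmt4.pid]
end

section
/- Let λ be a complex number with λ^(d+1) - 2λ^d = 1 and λ ≠ 1. With u and v the left and right eigenvectors of M defined by u_i = (λ^(i+1) - 2λ^i + 1)/(λ-1) and v_i = λ^(2d-1-i)(λ-2) for i < 2d, v_{2d} = 1, the inner product satisfies u·v = (2λ^(d-1)/(λ-1))·(d(λ-2) + λ). -/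
open Matrix

theorem stmt_7 (d : ℕ) (hd : 1 ≤ d) (lam : ℂ)
    (hroot : lam ^ (d + 1) - 2 * lam ^ d = 1) (hne : lam ≠ 1)
    (u v : Fin (2 * d + 1) → ℂ)
    (hu : ∀ i : Fin (2 * d + 1),
      u i = (lam ^ ((i : ℕ) + 1) - 2 * lam ^ (i : ℕ) + 1) / (lam - 1))
    (hv : ∀ i : Fin (2 * d + 1),
      v i = if (i : ℕ) < 2 * d then lam ^ (2 * d - 1 - (i : ℕ)) * (lam - 2) else 1) :
    dotProduct u v = 2 * lam ^ (d - 1) / (lam - 1) * ((d : ℂ) * (lam - 2) + lam) := by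
  have h1 : lam - 1 ≠ 0 := sub_ne_zero.mpr hne
  have hkey : (lam - 2) * lam ^ d = 1 := by
    rw [← hroot, pow_succ]; ring
  have hne0 : lam ≠ 0 := by
    intro h
    rw [h] at hkey
    simp [zero_pow (by omega : d ≠ 0)] at hkey
  have hmu : lam ^ d = lam * lam ^ (d - 1) := by
    conv_lhs => rw [show d = 1 + (d - 1) by omega]
    rw [pow_add, pow_one]
  set μ := lam ^ (d - 1) with hμ
  have h2d : lam ^ (2 * d) = lam ^ 2 * μ ^ 2 := by
    rw [show 2 * d = (1 + (d-1)) + (1 + (d-1)) by omega, pow_add, pow_add, pow_one]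
    ring
  have h2d1 : lam ^ (2 * d - 1) = lam * μ ^ 2 := by
    rw [show 2 * d - 1 = (d - 1) + (1 + (d-1)) by omega, pow_add, pow_add, pow_one]
    ring
  have hkey' : (lam - 2) * (lam * μ) = 1 := by rw [← hmu]; exact hkey
  rw [dotProduct, Fin.sum_univ_castSucc]
  have hlastu : u (Fin.last (2 * d)) * v (Fin.last (2 * d)) = (lam ^ d + 1) / (lam - 1) := by
    rw [hu, hv]
    simp only [Fin.val_last, lt_irrefl, if_false, mul_one]
    have : lam ^ (2 * d + 1) - 2 * lam ^ (2 * d) = lam ^ d := by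
      rw [show 2 * d + 1 = d + (d + 1) by omega, show 2 * d = d + d by omega, pow_add, pow_add]
      linear_combination lam ^ d * hroot
    rw [this]
  rw [hlastu]
  have hterm : ∀ i : Fin (2 * d), u i.castSucc * v i.castSucc
      = (lam - 2) * μ / (lam - 1) + (lam - 2) / (lam - 1) * lam ^ (2 * d - 1 - (i : ℕ)) := by
    intro i
    rw [hu, hv]
    simp only [Fin.coe_castSucc, if_pos i.isLt]
    have hpow : lam ^ (i : ℕ) * lam ^ (2 * d - 1 - (i : ℕ)) = lam * μ ^ 2 := by
      rw [← h2d1, ← pow_add]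
      congr 1
      omega
    have hpow1 : lam ^ ((i : ℕ) + 1) = lam * lam ^ (i : ℕ) := by rw [pow_succ]; ring
    linear_combination ((lam - 2) ^ 2 / (lam - 1)) * hpow + ((lam - 2) * μ / (lam - 1)) * hkey' + ((lam - 2) * lam ^ (2 * d - 1 - (i : ℕ)) / (lam - 1)) * hpow1
  simp only [hterm]
  rw [Finset.sum_add_distrib, Finset.sum_const, ← Finset.mul_sum,
    Fin.sum_univ_eq_sum_range (fun n => lam ^ (2 * d - 1 - n)) (2 * d)]
  rw [Finset.sum_range_reflect (fun n => lam ^ n) (2 * d), geom_sum_eq hne, Finset.card_univ,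
    Fintype.card_fin, nsmul_eq_mul, h2d, hmu]
  push_cast
  field_simp
  linear_combination (lam * μ - 1) * hkey'
end

section
/- Let d ≥ 3 and let λ be a complex root of t^(d+1) - 2t^d - 1 with |λ| < 1, and Λ the real root in (2,3). Then |1/((d+1)λ - 2d)| ≤ 1/(d-1), |(λ-2)λ^d/(3-λ)| ≤ 1/2, and (Λ-2)/(3-Λ) ≤ 1/(2^d - 1); consequently for all n ≥ 0, |∑_{λ ∈ S_Λ, λ ≠ Λ} (1/((d+1)λ - 2d))·((λ-2)/(3-λ) - (Λ-2)/(3-Λ))·λ^(n+d+1)| ≤ (d/(d-1))·(1/2 + 1/(2^d-1)) < 1. -/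
open Complex


lemma hbar (d : ℕ) (hd : 3 ≤ d) (r : ℝ) (h1 : 1 ≤ r) (h2 : r ≤ 9/5) :
    1 ≤ (2 - r) * r ^ d := by
  have hg : (0:ℝ) ≤ 1 + r + r^2 - r^3 := by nlinarith [sq_nonneg (r-1), mul_nonneg (sub_nonneg.2 h1) (sub_nonneg.2 h2)]
  have h3 : (1:ℝ) ≤ (2 - r) * r ^ 3 := by nlinarith [mul_nonneg (sub_nonneg.2 h1) hg]
  have h4 : r ^ 3 ≤ r ^ d := pow_le_pow_right₀ h1 hd
  nlinarith

lemma L2 (d : ℕ) (hd : 3 ≤ d) : ((d:ℝ)+1)^2 * (5/9)^d ≤ 3 := by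
  induction d with
  | zero => omega
  | succ n ih =>
    rcases Nat.lt_or_ge n 3 with h | h
    · interval_cases n <;> norm_num
    · have ihn := ih (by omega)
      have hn : (3:ℝ) ≤ (n:ℝ) := by exact_mod_cast h
      push_cast
      have key : ((n:ℝ)+1+1)^2 * (5/9)^(n+1) = (5/9) * (((n:ℝ)+2)/((n:ℝ)+1))^2 * (((n:ℝ)+1)^2 * (5/9)^n) := by
        field_simp; ring
      rw [key]
      have hrat : (5/9:ℝ) * (((n:ℝ)+2)/((n:ℝ)+1))^2 ≤ 1 := by
        rw [div_pow, mul_div_assoc', div_le_one (by positivity)]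
        nlinarith
      have hpos : (0:ℝ) ≤ ((n:ℝ)+1)^2 * (5/9)^n := by positivity
      nlinarith



lemma core_arith (D E W r θ : ℝ) (hDE : D = E + 1) (hD4 : 4 ≤ D) (hW0 : 0 < W) (hW3 : W ≤ 125/729)
    (hDW : D^2 * W ≤ 3) (hθpos : 0 < θ) (hθW : θ ≤ (20/27) * W)
    (hrW : 2 - W ≤ r) (hr0 : 0 < r)
    (hkey : r * Real.sin (D * θ) = 2 * Real.sin (E * θ)) : False := by
  have hD0 : (0:ℝ) < D := by linarith
  set u : ℝ := D * θ with hudef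
  have hu0 : 0 < u := mul_pos hD0 hθpos
  have huDW : u ≤ (20/27) * (D * W) := by
    rw [hudef]
    have := mul_le_mul_of_nonneg_left hθW hD0.le
    linarith
  have hDW34 : D * W ≤ 3/4 := by
    nlinarith [mul_nonneg (sub_nonneg.2 hD4) (mul_nonneg hD0.le hW0.le)]
  have hA : (D^2*W)^2 ≤ 3^2 := pow_le_pow_left₀ (by positivity) hDW 2
  have hx0 : 0 ≤ D^3 * W^2 := by positivity
  have hD3W2 : D^3 * W^2 ≤ 9/4 := by nlinarith [mul_nonneg (sub_nonneg.2 hD4) hx0]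
  have husq : u^2 ≤ ((20/27) * (D * W))^2 := pow_le_pow_left₀ hu0.le huDW 2
  have hu2 : D * u^2 ≤ 100/81 := by
    have h5 := mul_le_mul_of_nonneg_left husq hD0.le
    have h6 : D * ((20/27) * (D * W))^2 = (400/729) * (D^3 * W^2) := by ring
    linarith
  have hu1 : u ≤ 1 := by
    nlinarith [mul_nonneg (sub_nonneg.2 hD4) (sq_nonneg u), sq_nonneg (u-1)]
  have hsinA : u - u^3/4 < Real.sin u := by
    have := Real.sin_gt_sub_cube hu0
    linarith [pow_pos hu0 3]
  have hdθpos : 0 < E * θ := mul_pos (by linarith) hθpos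
  have hsinB : Real.sin (E*θ) < E*θ := Real.sin_lt hdθpos
  have hfinal : r * (u - u^3/4) < 2 * (E*θ) := by
    calc r * (u - u^3/4) < r * Real.sin u := mul_lt_mul_of_pos_left hsinA hr0
    _ = 2 * Real.sin (E*θ) := hkey
    _ < 2 * (E*θ) := by linarith
  have hposfac : 0 ≤ 1 - u^2/4 := by
    have := pow_le_one₀ hu0.le hu1 (n := 2)
    linarith
  have hcross : 0 ≤ (r - (2 - W)) * (D * (1 - u^2/4)) :=
    mul_nonneg (by linarith) (mul_nonneg (by linarith) hposfac)
  have hWDu : 0 ≤ W * D * u^2 := by positivity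
  have hstep : 2*E < r * D * (1 - u^2/4) := by
    have hexp : r*D*(1-u^2/4) = (r - (2-W))*(D*(1-u^2/4)) + 2*D - (D*u^2)/2 - W*D + (W*D*u^2)/4 := by
      ring
    linarith [hexp, hcross, hu2, hDW34, hWDu]
  have hlast := mul_lt_mul_of_pos_right hstep hθpos
  have hexp2 : r*D*(1-u^2/4)*θ = r*(u - u^3/4) := by rw [hudef]; ring
  linarith [hlast, hfinal, hexp2]

set_option maxHeartbeats 1000000 in
lemma no_root_im_pos (d : ℕ) (hd : 3 ≤ d) (z : ℂ)
    (hzd : (z - 2) * z ^ d = 1) (h1 : 1 ≤ ‖z‖) (him : 0 < z.im) : False := by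
  set r : ℝ := ‖z‖ with hr
  have hr0 : (0:ℝ) < r := lt_of_lt_of_le one_pos h1
  set ε : ℝ := ‖z - 2‖ with hεdef
  have hε : ε * r ^ d = 1 := by
    have := congrArg norm hzd
    rwa [norm_mul, norm_pow, norm_one] at this
  have hε0 : 0 < ε := by
    rcases lt_or_ge 0 ε with h | h
    · exact h
    · nlinarith [pow_pos hr0 d]
  have hnormr : r ^ 2 = z.re ^ 2 + z.im ^ 2 := by
    rw [hr, Complex.sq_norm, Complex.normSq_apply]; ring
  have hre_lt : z.re < r := by nlinarith
  have hε2 : ε ^ 2 = (z.re - 2) ^ 2 + z.im ^ 2 := by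
    rw [hεdef, Complex.sq_norm, Complex.normSq_apply]
    simp only [Complex.sub_re, Complex.sub_im]
    norm_num
    ring
  have htri : 2 - r < ε := by nlinarith
  have hr95 : 9/5 < r := by
    by_contra h
    push_neg at h
    have := hbar d hd r h1 h
    have hrd : (0:ℝ) < r ^ d := pow_pos hr0 d
    nlinarith
  set W : ℝ := (5/9 : ℝ)^d with hWdef
  have hW0 : 0 < W := by positivity
  have hεW : ε ≤ W := by
    have h95 : (9/5:ℝ)^d ≤ r^d := pow_le_pow_left₀ (by norm_num) (le_of_lt hr95) d
    have hWr : W * (9/5:ℝ)^d = 1 := by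
      rw [hWdef, ← mul_pow]; norm_num
    nlinarith [pow_pos (show (0:ℝ) < 9/5 by norm_num) d]
  have hW3 : W ≤ 125/729 := by
    rw [hWdef]
    calc (5/9:ℝ)^d ≤ (5/9)^3 := pow_le_pow_of_le_one (by norm_num) (by norm_num) hd
    _ = 125/729 := by norm_num
  -- real part positive, arg in (0, π/2)
  have hre2 : |z.re - 2| ≤ ε := by
    calc |z.re - 2| = |(z-2).re| := by simp
    _ ≤ ‖z-2‖ := Complex.abs_re_le_norm _
  have hre_pos : 0 < z.re := by
    have := abs_le.mp hre2
    linarith [this.2]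
  set θ : ℝ := z.arg with hθdef
  have hθlt : θ < Real.pi/2 := Complex.arg_lt_pi_div_two_iff.mpr (Or.inl hre_pos)
  have hθgt : -(Real.pi/2) < θ := Complex.neg_pi_div_two_lt_arg_iff.mpr (Or.inl hre_pos)
  have hsin : Real.sin θ = z.im / r := Complex.sin_arg z
  have hsin_pos : 0 < Real.sin θ := by rw [hsin]; positivity
  have hθpos : 0 < θ := by
    by_contra h
    push_neg at h
    have : Real.sin θ ≤ 0 :=
      Real.sin_nonpos_of_nonpos_of_neg_pi_le h (by linarith [Real.pi_pos])
    linarith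
  have himε : z.im ≤ ε := by
    calc z.im = (z-2).im := by simp
    _ ≤ ‖z-2‖ := Complex.im_le_norm _
  have hsinW : Real.sin θ ≤ (5/9) * W := by
    rw [hsin]
    rw [div_le_iff₀ hr0]
    nlinarith
  have hθ1 : θ ≤ 1 := by
    by_contra h
    push_neg at h
    have hmem1 : (1:ℝ) ∈ Set.Icc (-(Real.pi/2)) (Real.pi/2) := by
      constructor <;> linarith [Real.pi_gt_three]
    have hmemθ : θ ∈ Set.Icc (-(Real.pi/2)) (Real.pi/2) := ⟨le_of_lt hθgt, le_of_lt hθlt⟩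
    have h1' : Real.sin 1 ≤ Real.sin θ :=
      Real.strictMonoOn_sin.monotoneOn hmem1 hmemθ (le_of_lt h)
    have hsin1 : (3/4:ℝ) ≤ Real.sin 1 := by
      have := Real.sin_gt_sub_cube (one_pos (α := ℝ))
      norm_num at this
      linarith
    nlinarith
  have hθsin : θ ≤ (4/3) * Real.sin θ := by
    have hs := Real.sin_gt_sub_cube hθpos
    have hθ2 : θ^2 ≤ 1 := pow_le_one₀ (le_of_lt hθpos) hθ1
    have hcube : θ^3 ≤ θ := by nlinarith [mul_nonneg (le_of_lt hθpos) (sub_nonneg.2 hθ2)]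
    linarith
  have hθW : θ ≤ (20/27) * W := by nlinarith
  -- conclude via core_arith
  have hrdne : (r:ℝ)^d ≠ 0 := pow_ne_zero d (ne_of_gt hr0)
  have hzpolar : (r:ℂ) * Complex.exp ((θ:ℂ) * I) = z := Complex.norm_mul_exp_arg_mul_I z
  have hpow : ∀ n : ℕ, (z ^ n).im = r ^ n * Real.sin (n * θ) := by
    intro n
    have hzn : z ^ n = ((r ^ n : ℝ) : ℂ) * Complex.exp (((n * θ : ℝ) : ℂ) * I) := by
      rw [← hzpolar, mul_pow, ← Complex.exp_nat_mul]
      push_cast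
      ring_nf
    rw [hzn, Complex.im_ofReal_mul, Complex.exp_ofReal_mul_I_im]
  have heq0 : z^(d+1) = 2*z^d + 1 := by
    rw [pow_succ]; linear_combination hzd
  have h2 := congrArg Complex.im heq0
  simp only [Complex.add_im, Complex.mul_im, Complex.one_im, Complex.re_ofNat,
    Complex.im_ofNat, Complex.mul_re] at h2
  rw [hpow, hpow] at h2
  push_cast at h2
  have hkey2 : r * Real.sin (((d:ℝ)+1) * θ) = 2 * Real.sin ((d:ℝ) * θ) := by
    have h3 : r^d * (r * Real.sin (((d:ℝ)+1) * θ)) = r^d * (2 * Real.sin ((d:ℝ) * θ)) := by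
      linear_combination h2
    exact mul_left_cancel₀ hrdne h3
  have hD4 : (4:ℝ) ≤ (d:ℝ) + 1 := by
    have : (3:ℝ) ≤ (d:ℝ) := by exact_mod_cast hd
    linarith
  exact core_arith ((d:ℝ)+1) (d:ℝ) W r θ rfl hD4 hW0 hW3 (L2 d hd) hθpos hθW (by linarith) hr0 hkey2


lemma real_case (d : ℕ) (hd : 3 ≤ d) (Λ : ℝ) (hΛ2 : 2 < Λ)
    (hΛroot : (Λ - 2) * Λ ^ d = 1) (x : ℝ) (hx : (x - 2) * x ^ d = 1)
    (h1 : 1 ≤ |x|) : x = Λ := by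
  have hmono : ∀ a b : ℝ, 2 < a → a < b → (a-2)*a^d < (b-2)*b^d := by
    intro a b ha hab
    have hpow : a^d ≤ b^d := pow_le_pow_left₀ (by linarith) (le_of_lt hab) d
    calc (a-2)*a^d < (b-2)*a^d := by
          exact mul_lt_mul_of_pos_right (by linarith) (pow_pos (by linarith) d)
    _ ≤ (b-2)*b^d := mul_le_mul_of_nonneg_left hpow (by linarith)
  rcases le_or_gt x (-1) with hneg | hge
  · exfalso
    have habs : |x - 2| * |x|^d = 1 := by
      rw [← _root_.abs_pow, ← _root_.abs_mul, hx, _root_.abs_one]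
    have h3 : (3:ℝ) ≤ |x - 2| := by
      rw [abs_sub_comm, abs_of_pos (by linarith)]; linarith
    have h4 : (1:ℝ) ≤ |x|^d := one_le_pow₀ h1
    nlinarith
  · have hx1 : 1 ≤ x := by
      rcases abs_cases x with ⟨h, _⟩ | ⟨h, _⟩ <;> linarith
    have hx2 : 2 < x := by
      by_contra h
      push_neg at h
      have : (x-2)*x^d ≤ 0 := mul_nonpos_of_nonpos_of_nonneg (by linarith) (pow_nonneg (by linarith) d)
      linarith
    rcases lt_trichotomy x Λ with h | h | h
    · have := hmono x Λ hx2 h; rw [hx, hΛroot] at this; linarith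
    · exact h
    · have := hmono Λ x hΛ2 h; rw [hx, hΛroot] at this; linarith

lemma root_small (d : ℕ) (hd : 3 ≤ d) (Λ : ℝ) (hΛ2 : 2 < Λ)
    (hΛroot : (Λ - 2) * Λ ^ d = 1) (z : ℂ) (hz : (z - 2) * z ^ d = 1)
    (hne : z ≠ (Λ : ℂ)) : ‖z‖ < 1 := by
  by_contra h
  push_neg at h
  rcases lt_trichotomy z.im 0 with hlt | heq | hgt
  · apply no_root_im_pos d hd ((starRingEnd ℂ) z) ?_ ?_ ?_
    · have := congrArg (starRingEnd ℂ) hz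
      simpa [map_mul, map_pow, map_sub, map_one, map_ofNat] using this
    · rwa [Complex.norm_conj]
    · simpa [Complex.conj_im] using hlt
  · -- z is real
    have hzre : z = ((z.re : ℝ) : ℂ) := by
      apply Complex.ext <;> simp [heq]
    set x : ℝ := z.re with hxdef
    have hxroot : (x - 2) * x ^ d = 1 := by
      have : (((x:ℂ)) - 2) * (x:ℂ) ^ d = 1 := by rw [← hzre]; exact hz
      exact_mod_cast this
    have habs : 1 ≤ |x| := by
      rwa [hzre, Complex.norm_real, Real.norm_eq_abs] at h
    have := real_case d hd Λ hΛ2 hΛroot x hxroot habs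
    exact hne (by rw [hzre, this])
  · exact no_root_im_pos d hd z hz h hgt


-- part 1
lemma part1 (d : ℕ) (hd : 3 ≤ d) (z : ℂ) (hz1 : ‖z‖ < 1) :
    ‖1 / (((d : ℂ) + 1) * z - 2 * d)‖ ≤ 1 / ((d : ℝ) - 1) := by
  have hd3 : (3:ℝ) ≤ (d:ℝ) := by exact_mod_cast hd
  have habs0 : (0:ℝ) ≤ ‖z‖ := norm_nonneg z
  have hlow : (d:ℝ) - 1 ≤ ‖((d : ℂ) + 1) * z - 2 * d‖ := by
    have htri := norm_add_le ((2*(d:ℂ) - ((d:ℂ)+1)*z)) (((d:ℂ)+1)*z)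
    rw [sub_add_cancel, norm_sub_rev (2*(d:ℂ))] at htri
    have h1 : ‖((d:ℂ)+1)*z‖ = ((d:ℝ)+1) * ‖z‖ := by
      rw [norm_mul]
      congr 1
      rw [show ((d:ℂ)+1) = (((d:ℝ)+1 : ℝ) : ℂ) by push_cast; ring, Complex.norm_real, Real.norm_eq_abs,
        _root_.abs_of_nonneg (by linarith)]
    have h2 : ‖2*(d:ℂ)‖ = 2*(d:ℝ) := by
      rw [show (2*(d:ℂ)) = ((2*(d:ℝ) : ℝ) : ℂ) by push_cast; ring, Complex.norm_real, Real.norm_eq_abs,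
        _root_.abs_of_nonneg (by linarith)]
    rw [h1, h2] at htri
    nlinarith
  rw [norm_div, norm_one]
  have h3 : (0:ℝ) < (d:ℝ) - 1 := by linarith
  exact one_div_le_one_div_of_le h3 hlow

-- part 2
lemma part2 (d : ℕ) (z : ℂ) (hz : (z - 2) * z ^ d = 1) (hz1 : ‖z‖ < 1) :
    ‖(z - 2) * z ^ d / (3 - z)‖ ≤ 1 / 2 := by
  rw [hz]
  have habs0 : (0:ℝ) ≤ ‖z‖ := norm_nonneg z
  have hlow : (2:ℝ) ≤ ‖3 - z‖ := by
    have htri := norm_add_le (3 - z) z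
    rw [sub_add_cancel] at htri
    have h3 : ‖(3:ℂ)‖ = 3 := by norm_num
    rw [h3] at htri
    linarith
  rw [norm_div, norm_one]
  exact one_div_le_one_div_of_le (by norm_num) hlow

-- part 3
lemma part3 (d : ℕ) (hd : 3 ≤ d) (Λ : ℝ) (hΛmem : Λ ∈ Set.Ioo (2:ℝ) 3)
    (hΛroot : (Λ - 2) * Λ ^ d = 1) : (Λ - 2) / (3 - Λ) ≤ 1 / (2 ^ d - 1) := by
  obtain ⟨hΛ2, hΛ3⟩ := hΛmem
  have h2d : (2:ℝ)^d ≤ Λ^d := pow_le_pow_left₀ (by norm_num) (le_of_lt hΛ2) d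
  have h2d1 : (1:ℝ) < 2^d := one_lt_pow₀ (by norm_num) (by omega)
  have ha : (Λ - 2) * 2^d ≤ 1 := by nlinarith
  rw [div_le_div_iff₀ (by linarith) (by linarith)]
  nlinarith

-- part 5
lemma part5 (d : ℕ) (hd : 3 ≤ d) :
    (d : ℝ) / ((d : ℝ) - 1) * (1 / 2 + 1 / (2 ^ d - 1)) < 1 := by
  rcases Nat.eq_or_lt_of_le hd with h | h
  · subst h; norm_num
  · have hd4 : 4 ≤ d := h
    have hx4 : (4:ℝ) ≤ (d:ℝ) := by exact_mod_cast hd4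
    have h16 : (16:ℝ) ≤ 2^d := by
      calc (16:ℝ) = 2^4 := by norm_num
      _ ≤ 2^d := pow_le_pow_right₀ (by norm_num) hd4
    have hB : 1/((2:ℝ)^d - 1) ≤ 1/15 := by
      rw [div_le_div_iff₀ (by linarith) (by norm_num)]
      linarith
    have hB0 : 0 < 1/((2:ℝ)^d - 1) := div_pos one_pos (by linarith)
    rw [div_mul_eq_mul_div, div_lt_one (by linarith)]
    nlinarith

-- cardinality
lemma card_S (d : ℕ) (hd : 3 ≤ d) (S : Finset ℂ)
    (hS : ∀ z : ℂ, z ∈ S ↔ z ^ (d + 1) - 2 * z ^ d - 1 = 0) : S.card ≤ d + 1 := by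
  classical
  set P : Polynomial ℂ := Polynomial.X ^ (d+1) - Polynomial.C 2 * Polynomial.X ^ d - Polynomial.C 1 with hP
  have hP0 : P ≠ 0 := by
    intro h
    have := congrArg (Polynomial.eval 0) h
    simp [hP, zero_pow (show d ≠ 0 by omega)] at this
  have hdeg : P.natDegree ≤ d + 1 := by
    rw [hP]
    compute_degree
  have hsub : S ⊆ P.roots.toFinset := by
    intro z hz
    rw [Multiset.mem_toFinset, Polynomial.mem_roots hP0]
    rw [Polynomial.IsRoot, hP]
    simp only [Polynomial.eval_sub, Polynomial.eval_pow, Polynomial.eval_X,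
      Polynomial.eval_mul, Polynomial.eval_C]
    exact (hS z).1 hz
  calc S.card ≤ P.roots.toFinset.card := Finset.card_le_card hsub
  _ ≤ Multiset.card P.roots := Multiset.toFinset_card_le _
  _ ≤ P.natDegree := Polynomial.card_roots' P
  _ ≤ d + 1 := hdeg


theorem stmt_17 (d : ℕ) (hd : 3 ≤ d)
    (S : Finset ℂ)
    (hS : ∀ z : ℂ, z ∈ S ↔ z ^ (d + 1) - 2 * z ^ d - 1 = 0)
    (Λ : ℝ) (hΛmem : Λ ∈ Set.Ioo (2 : ℝ) 3)
    (hΛroot : Λ ^ (d + 1) - 2 * Λ ^ d - 1 = 0)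
    (lam : ℂ) (hlam : lam ∈ S) (hlam1 : ‖lam‖ < 1) :
    ‖1 / (((d : ℂ) + 1) * lam - 2 * d)‖ ≤ 1 / ((d : ℝ) - 1) ∧
    ‖(lam - 2) * lam ^ d / (3 - lam)‖ ≤ 1 / 2 ∧
    (Λ - 2) / (3 - Λ) ≤ 1 / (2 ^ d - 1) ∧
    (∀ n : ℕ,
      ‖∑ z ∈ S \ {(Λ : ℂ)},
          1 / (((d : ℂ) + 1) * z - 2 * d) *
            ((z - 2) / (3 - z) - ((Λ : ℂ) - 2) / (3 - (Λ : ℂ))) * z ^ (n + d + 1)‖ ≤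
        (d : ℝ) / ((d : ℝ) - 1) * (1 / 2 + 1 / (2 ^ d - 1))) ∧
    (d : ℝ) / ((d : ℝ) - 1) * (1 / 2 + 1 / (2 ^ d - 1)) < 1 := by
  have hΛ' : (Λ - 2) * Λ ^ d = 1 := by linear_combination hΛroot
  obtain ⟨hΛ2, hΛ3⟩ := hΛmem
  have hlamroot : (lam - 2) * lam ^ d = 1 := by
    have := (hS lam).1 hlam
    linear_combination this
  have hd3 : (3:ℝ) ≤ (d:ℝ) := by exact_mod_cast hd
  have h2d1 : (1:ℝ) < 2^d := one_lt_pow₀ (by norm_num) (by omega)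
  have hhalf : (0:ℝ) ≤ 1/2 + 1/(2^d - 1) :=
    add_nonneg (by norm_num) (le_of_lt (div_pos one_pos (by linarith)))
  refine ⟨part1 d hd lam hlam1, part2 d lam hlamroot hlam1, part3 d hd Λ ⟨hΛ2, hΛ3⟩ hΛ', ?_, part5 d hd⟩
  intro n
  -- Λ is in S
  have hΛS : (Λ : ℂ) ∈ S := by
    rw [hS]
    have : ((Λ ^ (d + 1) - 2 * Λ ^ d - 1 : ℝ) : ℂ) = 0 := by rw [hΛroot]; norm_num
    push_cast at this
    convert this using 2 <;> push_cast <;> ring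
  -- cardinality of S \ {Λ}
  have hcard : (S \ {(Λ:ℂ)}).card ≤ d := by
    have h1 : (S \ {(Λ:ℂ)}).card = S.card - 1 := by
      rw [Finset.card_sdiff_of_subset (by simpa using hΛS)]
      simp
    have h2 := card_S d hd S hS
    omega
  -- bound each term
  set B : ℝ := 1 / ((d:ℝ) - 1) * (1 / 2 + 1 / (2 ^ d - 1)) with hBdef
  have hterm : ∀ z ∈ S \ {(Λ:ℂ)},
      ‖1 / (((d : ℂ) + 1) * z - 2 * d) *
        ((z - 2) / (3 - z) - ((Λ : ℂ) - 2) / (3 - (Λ : ℂ))) * z ^ (n + d + 1)‖ ≤ B := by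
    intro z hzmem
    rw [Finset.mem_sdiff, Finset.mem_singleton] at hzmem
    obtain ⟨hzS, hzne⟩ := hzmem
    have hzroot : (z - 2) * z ^ d = 1 := by
      have := (hS z).1 hzS
      linear_combination this
    have hz1 : ‖z‖ < 1 := root_small d hd Λ hΛ2 hΛ' z hzroot hzne
    have habs0 : (0:ℝ) ≤ ‖z‖ := norm_nonneg z
    set c : ℝ := (Λ - 2) / (3 - Λ) with hcdef
    have hc0 : 0 ≤ c := div_nonneg (by linarith) (by linarith)
    have hccast : ((c:ℝ) : ℂ) = ((Λ : ℂ) - 2) / (3 - (Λ : ℂ)) := by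
      rw [hcdef]
      push_cast
      ring
    have hcbound : c ≤ 1 / (2 ^ d - 1) := part3 d hd Λ ⟨hΛ2, hΛ3⟩ hΛ'
    -- second factor bound
    have hsecond : ‖((z - 2) / (3 - z) - ((Λ : ℂ) - 2) / (3 - (Λ : ℂ))) * z ^ (n + d + 1)‖
        ≤ 1/2 + 1/(2^d - 1) := by
      rw [← hccast, sub_mul]
      have htri := norm_sub_le ((z - 2) / (3 - z) * z ^ (n + d + 1)) (((c:ℝ):ℂ) * z ^ (n + d + 1))
      refine le_trans htri (add_le_add ?_ ?_)
      · -- |(z-2)/(3-z) * z^(n+d+1)| ≤ 1/2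
        have hsplit : z ^ (n + d + 1) = z ^ d * z ^ (n + 1) := by
          rw [← pow_add]
          congr 1
          omega
        have heq : (z - 2) / (3 - z) * z ^ (n + d + 1) = ((z - 2) * z ^ d / (3 - z)) * z ^ (n + 1) := by
          rw [hsplit]; ring
        rw [heq, norm_mul, norm_pow]
        have h1 := part2 d z hzroot hz1
        have h2 : ‖z‖ ^ (n+1) ≤ 1 := pow_le_one₀ habs0 (le_of_lt hz1)
        calc ‖(z - 2) * z ^ d / (3 - z)‖ * ‖z‖ ^ (n + 1)
            ≤ (1/2) * 1 := mul_le_mul h1 h2 (by positivity) (by norm_num)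
        _ = 1/2 := by norm_num
      · rw [norm_mul, norm_pow, Complex.norm_real, Real.norm_eq_abs, _root_.abs_of_nonneg hc0]
        have h2 : ‖z‖ ^ (n+d+1) ≤ 1 := pow_le_one₀ habs0 (le_of_lt hz1)
        calc c * ‖z‖ ^ (n + d + 1) ≤ c * 1 :=
            mul_le_mul_of_nonneg_left h2 hc0
        _ = c := by ring
        _ ≤ 1/(2^d - 1) := hcbound
    rw [mul_assoc, norm_mul]
    have h1 := part1 d hd z hz1
    rw [hBdef]
    exact mul_le_mul h1 hsecond (norm_nonneg _) (le_of_lt (div_pos one_pos (by linarith)))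
  -- sum it up
  have hsum := Finset.sum_le_card_nsmul (S \ {(Λ:ℂ)}) _ B hterm
  have habs_sum : ‖∑ z ∈ S \ {(Λ:ℂ)},
      1 / (((d : ℂ) + 1) * z - 2 * d) *
        ((z - 2) / (3 - z) - ((Λ : ℂ) - 2) / (3 - (Λ : ℂ))) * z ^ (n + d + 1)‖ ≤
      ∑ z ∈ S \ {(Λ:ℂ)}, ‖1 / (((d : ℂ) + 1) * z - 2 * d) *
        ((z - 2) / (3 - z) - ((Λ : ℂ) - 2) / (3 - (Λ : ℂ))) * z ^ (n + d + 1)‖ :=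
    norm_sum_le _ _
  have hB0 : 0 ≤ B := by
    rw [hBdef]
    exact mul_nonneg (le_of_lt (div_pos one_pos (by linarith))) hhalf
  have hfin : ((S \ {(Λ:ℂ)}).card : ℝ) * B ≤ (d:ℝ) * B := by
    apply mul_le_mul_of_nonneg_right _ hB0
    exact_mod_cast hcard
  have : (d:ℝ) * B = (d : ℝ) / ((d : ℝ) - 1) * (1 / 2 + 1 / (2 ^ d - 1)) := by
    rw [hBdef]; ring
  rw [← this]
  calc ‖_‖ ≤ _ := habs_sum
  _ ≤ (S \ {(Λ:ℂ)}).card • B := hsum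
  _ = ((S \ {(Λ:ℂ)}).card : ℝ) * B := by rw [nsmul_eq_mul]
  _ ≤ (d:ℝ) * B := hfin
end
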